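/- Fix an integer d ≥ 2 and k ∈ (−π,π)^d. For ι ∈ {2, 3, …, d} define v⃗^{(−ι)} = (1 − e^{i k_ι})·(e^{i k_1}·e⃗_1 − e⃗_{−1}) − (1 − e^{i k_1})·(e^{i k_ι}·e⃗_ι − e⃗_{−ι}) ∈ ℂ^I. Then for every such ι and every k, A[k]·v⃗^{(−ι)} = v⃗^{(−ι)}; if moreover e^{i k_1} ≠ 1, the d−1 vectors v⃗^{(−2)}, …, v⃗^{(−d)} are linearly independent. In addition, for every k ∈ (−π,π)^d (including those with some e^{i k_j} = 1) the eigenvalue 1 of A[k] has geometric multiplicity at least d−1. -/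

import Mathlib

open scoped BigOperators
open Matrix

noncomputable section

/-- The index set `I = {-d, …, -1, 1, …, d}`. -/
def Idx (d : ℕ) : Finset ℤ := (Finset.Icc (-(d : ℤ)) d).erase 0

lemma mem_Idx {d : ℕ} {ι : ℤ} (h : ι ∈ Idx d) : ι ≠ 0 ∧ -(d : ℤ) ≤ ι ∧ ι ≤ d := by
  simpa [Idx, Finset.mem_erase, Finset.mem_Icc, and_assoc] using h

lemma mem_Idx' {d : ℕ} {ι : ℤ} (h1 : ι ≠ 0) (h2 : -(d : ℤ) ≤ ι) (h3 : ι ≤ d) :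
    ι ∈ Idx d := by
  simp [Idx, Finset.mem_erase, Finset.mem_Icc]; omega

/-- `k_ι = sign(ι) · k_{|ι|}` (with `|ι| ∈ {1,…,d}` re-indexed as `Fin d`). -/
def kc {d : ℕ} (k : Fin d → ℝ) (ι : Idx d) : ℝ :=
  (ι.1.sign : ℝ) * k ⟨ι.1.natAbs - 1, by
    obtain ⟨h1, h2, h3⟩ := mem_Idx ι.2; omega⟩

/-- The negation `-ι` as an element of the index set. -/
def negIdx {d : ℕ} (ι : Idx d) : Idx d :=
  ⟨-ι.1, by obtain ⟨h1, h2, h3⟩ := mem_Idx ι.2; exact mem_Idx' (by omega) (by omega) (by omega)⟩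

/-- The coordinate vector `e⃗_ι ∈ ℂ^I`. -/
def eVec {d : ℕ} (ι : Idx d) : Idx d → ℂ := fun κ => if κ = ι then 1 else 0

/-- The unit step `e_ι = sign(ι)·(basis vector |ι|)` in `ℤ^d`. -/
def stepVec {d : ℕ} (ι : Idx d) : Fin d → ℤ :=
  fun j => if (j : ℕ) = ι.1.natAbs - 1 then ι.1.sign else 0

/-- The all-ones matrix `C`. -/
def matC (d : ℕ) : Matrix (Idx d) (Idx d) ℂ := Matrix.of fun _ _ => 1

/-- The matrix `J` with `J_{ι,κ} = δ_{ι,-κ}`. -/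
def matJ (d : ℕ) : Matrix (Idx d) (Idx d) ℂ :=
  Matrix.of fun ι κ => if ι.1 = -κ.1 then 1 else 0

/-- The diagonal matrix `D[k]` with entries `e^{i k_ι}`. -/
def matD {d : ℕ} (k : Fin d → ℝ) : Matrix (Idx d) (Idx d) ℂ :=
  Matrix.diagonal fun ι => Complex.exp (Complex.I * (kc k ι : ℂ))

/-- The NBW transition matrix `A[k] = (C − J)·D[−k]`. -/
def matA {d : ℕ} (k : Fin d → ℝ) : Matrix (Idx d) (Idx d) ℂ :=
  (matC d - matJ d) * matD (-k)

/-- `ω` is an `n`-step nearest-neighbour non-backtracking walk on `ℤ^d`. -/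
def IsNBW (d n : ℕ) (ω : Fin (n + 1) → (Fin d → ℤ)) : Prop :=
  ω 0 = 0 ∧
  (∀ i : ℕ, ∀ hi : i < n,
    (∑ j, |ω ⟨i + 1, by omega⟩ j - ω ⟨i, by omega⟩ j|) = 1) ∧
  (∀ i : ℕ, ∀ hi : i + 2 ≤ n, ω ⟨i + 2, by omega⟩ ≠ ω ⟨i, by omega⟩)

/-- `b_n(x)`: the number of `n`-step NBWs ending at `x`. -/
def bc (d n : ℕ) (x : Fin d → ℤ) : ℕ :=
  Nat.card {ω : Fin (n + 1) → (Fin d → ℤ) // IsNBW d n ω ∧ ω (Fin.last n) = x}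

/-- `b_n^ι(x)`: the number of `n`-step NBWs ending at `x` whose first step is not `e_ι`. -/
def bcRes (d n : ℕ) (ι : Idx d) (x : Fin d → ℤ) : ℕ :=
  Nat.card {ω : Fin (n + 1) → (Fin d → ℤ) //
    IsNBW d n ω ∧ ω (Fin.last n) = x ∧ ∀ _ : 1 ≤ n, ω ⟨1, by omega⟩ ≠ stepVec ι}

/-- Fourier transform `f̂(k) = Σ_x f(x) e^{i k·x}` of a (finitely supported) `f : ℤ^d → ℕ`. -/
def fhat {d : ℕ} (f : (Fin d → ℤ) → ℕ) (k : Fin d → ℝ) : ℂ :=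
  ∑' x : Fin d → ℤ, (f x : ℂ) * Complex.exp (Complex.I * ∑ j, (k j : ℂ) * (x j : ℂ))

/-- `b̂_n(k)`. -/
def bhat (d n : ℕ) (k : Fin d → ℝ) : ℂ := fhat (bc d n) k

/-- `b⃗_n(k)`, the vector with entries `b̂_n^ι(k)`. -/
def bvec (d n : ℕ) (k : Fin d → ℝ) : Idx d → ℂ := fun ι => fhat (bcRes d n ι) k

/-- `D̂(k) = (1/d) Σ_j cos k_j`. -/
def Dhat {d : ℕ} (k : Fin d → ℝ) : ℝ := (1 / d) * ∑ j, Real.cos (k j)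


/-- The index `1 ∈ I` (for `d ≥ 1`). -/
def idxOne (d : ℕ) (hd : 1 ≤ d) : Idx d :=
  ⟨1, mem_Idx' (by omega) (by omega) (by omega)⟩

/-- The vector `v⃗^{(−ι)} = (1−e^{ik_ι})(e^{ik_1}e⃗_1 − e⃗_{−1}) − (1−e^{ik_1})(e^{ik_ι}e⃗_ι − e⃗_{−ι})`. -/
def vPlusOne {d : ℕ} (hd : 1 ≤ d) (k : Fin d → ℝ) (ι : Idx d) : Idx d → ℂ :=
  (1 - Complex.exp (Complex.I * (kc k ι : ℂ))) •
      (Complex.exp (Complex.I * (kc k (idxOne d hd) : ℂ)) • eVec (idxOne d hd) -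
        eVec (negIdx (idxOne d hd)))
    - (1 - Complex.exp (Complex.I * (kc k (idxOne d hd) : ℂ))) •
      (Complex.exp (Complex.I * (kc k ι : ℂ)) • eVec ι - eVec (negIdx ι))

section AuxNBW

variable {d : ℕ}

lemma negIdx_val (ι : Idx d) : (negIdx ι).1 = -ι.1 := rfl

lemma idx_eq_iff (ι κ : Idx d) : ι = κ ↔ ι.1 = κ.1 := Subtype.ext_iff

lemma kc_neg (k : Fin d → ℝ) (ι : Idx d) : kc (-k) ι = -(kc k ι) := by
  simp [kc]

lemma kc_negIdx (k : Fin d → ℝ) (ι : Idx d) : kc k (negIdx ι) = -(kc k ι) := by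
  obtain ⟨h1, h2, h3⟩ := mem_Idx ι.2
  simp only [kc, negIdx]
  have hn : (-ι.1).natAbs = ι.1.natAbs := by omega
  have hf : (⟨(-ι.1).natAbs - 1, by omega⟩ : Fin d) = ⟨ι.1.natAbs - 1, by omega⟩ := by
    simp [Fin.ext_iff, hn]
  rw [hf, Int.sign_neg]
  push_cast
  ring

lemma matA_apply (k : Fin d → ℝ) (κ lam : Idx d) :
    matA k κ lam = (1 - if κ.1 = -lam.1 then 1 else 0) *
      Complex.exp (-(Complex.I * (kc k lam : ℂ))) := by
  simp only [matA, matD, Matrix.mul_diagonal, Matrix.sub_apply, matC, matJ, Matrix.of_apply,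
    kc_neg]
  push_cast
  ring_nf

/-- The vector `u^{(ι)} = e^{i k_ι} e⃗_ι − e⃗_{−ι}`. -/
def uVec (k : Fin d → ℝ) (ι : Idx d) : Idx d → ℂ :=
  Complex.exp (Complex.I * (kc k ι : ℂ)) • eVec ι - eVec (negIdx ι)

lemma exp_mul_exp_neg (z : ℂ) : Complex.exp (-z) * Complex.exp z = 1 := by
  rw [← Complex.exp_add]; simp

lemma matA_mulVec_uVec (k : Fin d → ℝ) (ι : Idx d) :
    matA k *ᵥ uVec k ι =
      (1 - Complex.exp (Complex.I * (kc k ι : ℂ))) • (fun _ => (1 : ℂ)) + uVec k ι := by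
  funext κ
  obtain ⟨h1, h2, h3⟩ := mem_Idx ι.2
  have key := exp_mul_exp_neg (Complex.I * (kc k ι : ℂ))
  simp only [Matrix.mulVec, dotProduct, uVec, eVec, Pi.add_apply, Pi.sub_apply, Pi.smul_apply,
    smul_eq_mul, mul_sub, mul_ite, mul_one, mul_zero, Finset.sum_sub_distrib,
    Finset.sum_ite_eq', Finset.mem_univ, if_true]
  rw [matA_apply, matA_apply, kc_negIdx]
  have hc1 : (κ.1 = -ι.1) ↔ (κ = negIdx ι) := by
    rw [idx_eq_iff κ (negIdx ι), negIdx_val]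
  have hc2 : (κ.1 = -(negIdx ι).1) ↔ (κ = ι) := by
    rw [idx_eq_iff κ ι, negIdx_val, neg_neg]
  simp only [hc1, hc2]
  push_cast
  have hexp : Complex.exp (-(Complex.I * -(kc k ι : ℂ))) =
      Complex.exp (Complex.I * (kc k ι : ℂ)) := by ring_nf
  rw [hexp]
  by_cases hk1 : κ = ι
  · have hk2 : κ ≠ negIdx ι := by
      intro hcon
      rw [hk1] at hcon
      have := congrArg Subtype.val hcon
      rw [negIdx_val] at this
      omega
    simp only [if_pos hk1, if_neg hk2]
    linear_combination key
  · by_cases hk2 : κ = negIdx ι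
    · simp only [if_neg hk1, if_pos hk2]
      ring
    · simp only [if_neg hk1, if_neg hk2]
      linear_combination key

lemma vPlusOne_eq_comb (hd : 1 ≤ d) (k : Fin d → ℝ) (ι : Idx d) :
    vPlusOne hd k ι =
      (1 - Complex.exp (Complex.I * (kc k ι : ℂ))) • uVec k (idxOne d hd) -
        (1 - Complex.exp (Complex.I * (kc k (idxOne d hd) : ℂ))) • uVec k ι := rfl

lemma matA_mulVec_vPlusOne (hd : 1 ≤ d) (k : Fin d → ℝ) (ι : Idx d) :
    matA k *ᵥ vPlusOne hd k ι = vPlusOne hd k ι := by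
  rw [vPlusOne_eq_comb, Matrix.mulVec_sub, Matrix.mulVec_smul, Matrix.mulVec_smul,
    matA_mulVec_uVec, matA_mulVec_uVec]
  module

/-- The positive index `j+1` as an element of `Idx d`. -/
def posIdx {d : ℕ} (j : Fin d) : Idx d :=
  ⟨(j : ℤ) + 1, by
    have h := j.isLt
    exact mem_Idx' (by omega) (by omega) (by omega)⟩

lemma posIdx_val (j : Fin d) : (posIdx j).1 = (j : ℤ) + 1 := rfl

lemma kc_posIdx (k : Fin d → ℝ) (j : Fin d) : kc k (posIdx j) = k j := by
  have hs : ((j : ℤ) + 1).sign = 1 := Int.sign_eq_one_iff_pos.mpr (by omega)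
  have hn : ((j : ℤ) + 1).natAbs = (j : ℕ) + 1 := by omega
  simp only [kc, posIdx, hs, hn]
  norm_num

lemma uVec_apply_negIdx_posIdx (k : Fin d → ℝ) (j j' : Fin d) :
    uVec k (posIdx j') (negIdx (posIdx j)) = -(if j' = j then 1 else 0) := by
  have h1 : negIdx (posIdx j) ≠ posIdx j' := by
    intro h
    have := congrArg Subtype.val h
    rw [negIdx_val, posIdx_val, posIdx_val] at this
    omega
  have h2 : (negIdx (posIdx j) = negIdx (posIdx j')) = (j' = j) := by
    simp only [idx_eq_iff, negIdx_val, posIdx_val, neg_inj, add_left_inj, Fin.ext_iff,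
      eq_comm (a := (j : ℤ))]
    simp [Fin.ext_iff, Int.natCast_inj, eq_comm]
  simp only [uVec, Pi.sub_apply, Pi.smul_apply, eVec, if_neg h1, smul_zero, h2, zero_sub]
  all_goals try split_ifs <;> simp

/-- The linear map `c ↦ Σ_j c_j u^{(j)}`. -/
def phiMap (k : Fin d → ℝ) : (Fin d → ℂ) →ₗ[ℂ] (Idx d → ℂ) where
  toFun c := ∑ j, c j • uVec k (posIdx j)
  map_add' a b := by simp [add_smul, Finset.sum_add_distrib]
  map_smul' r a := by simp [smul_smul, Finset.smul_sum]

/-- The linear functional `c ↦ Σ_j c_j (1 − e^{i k_j})`. -/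
def fMap (k : Fin d → ℝ) : (Fin d → ℂ) →ₗ[ℂ] ℂ where
  toFun c := ∑ j, c j * (1 - Complex.exp (Complex.I * (kc k (posIdx j) : ℂ)))
  map_add' a b := by simp [add_mul, Finset.sum_add_distrib]
  map_smul' r a := by simp [mul_assoc, Finset.mul_sum]

lemma phiMap_injective (k : Fin d → ℝ) : Function.Injective (phiMap k) := by
  rw [injective_iff_map_eq_zero]
  intro c hc
  funext j
  have h := congrFun hc (negIdx (posIdx j))
  simp only [phiMap, LinearMap.coe_mk, AddHom.coe_mk, Finset.sum_apply, Pi.smul_apply,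
    smul_eq_mul, uVec_apply_negIdx_posIdx, mul_neg, mul_ite, mul_one, mul_zero,
    Finset.sum_neg_distrib, Finset.sum_ite_eq', Finset.mem_univ, if_true, Pi.zero_apply,
    neg_eq_zero] at h
  exact h

lemma phiMap_fixed (k : Fin d → ℝ) (c : Fin d → ℂ) (hc : fMap k c = 0) :
    matA k *ᵥ phiMap k c = phiMap k c := by
  simp only [phiMap, LinearMap.coe_mk, AddHom.coe_mk]
  rw [← Matrix.mulVecLin_apply, map_sum]
  simp only [_root_.map_smul, Matrix.mulVecLin_apply, matA_mulVec_uVec, smul_add,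
    Finset.sum_add_distrib, smul_smul]
  rw [← Finset.sum_smul]
  have : (∑ j, c j * (1 - Complex.exp (Complex.I * (kc k (posIdx j) : ℂ)))) = 0 := hc
  rw [this, zero_smul, zero_add]

lemma vPlusOne_apply_negIdx (hd : 1 ≤ d) (k : Fin d → ℝ) (ι ι' : Idx d)
    (h2 : 2 ≤ ι.1) (h2' : 2 ≤ ι'.1) :
    vPlusOne hd k ι' (negIdx ι) =
      if ι' = ι then 1 - Complex.exp (Complex.I * (kc k (idxOne d hd) : ℂ)) else 0 := by
  have e1 : negIdx ι ≠ idxOne d hd := by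
    intro h; have := congrArg Subtype.val h
    rw [negIdx_val] at this; exact absurd this (by show -ι.1 ≠ 1; omega)
  have e2 : negIdx ι ≠ negIdx (idxOne d hd) := by
    intro h; have := congrArg Subtype.val h
    rw [negIdx_val, negIdx_val] at this; exact absurd this (by show -ι.1 ≠ -1; omega)
  have e3 : negIdx ι ≠ ι' := by
    intro h; have := congrArg Subtype.val h
    rw [negIdx_val] at this; omega
  have e4 : (negIdx ι = negIdx ι') = (ι' = ι) := by
    simp only [idx_eq_iff, negIdx_val, neg_inj, eq_comm]
  simp only [vPlusOne, Pi.sub_apply, Pi.smul_apply, eVec, if_neg e1, if_neg e2, if_neg e3, e4,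
    smul_zero, smul_eq_mul, mul_zero, sub_zero, zero_sub, mul_neg, mul_ite, mul_one, mul_zero,
    zero_sub, neg_neg]
  all_goals try split_ifs <;> ring

end AuxNBW

/-- for `ι ∈ {2,…,d}`, `A[k]·v⃗^{(−ι)} = v⃗^{(−ι)}`; if `e^{ik_1} ≠ 1`
the vectors `v⃗^{(−2)},…,v⃗^{(−d)}` are linearly independent; and for every `k` the
eigenvalue `1` of `A[k]` has geometric multiplicity at least `d−1`. -/
theorem nbw_eigenvalue_one (d : ℕ) (hd : 2 ≤ d) (k : Fin d → ℝ)
    (hk : ∀ j, k j ∈ Set.Ioo (-Real.pi) Real.pi) :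
    (∀ ι : Idx d, 2 ≤ ι.1 →
      matA k *ᵥ vPlusOne (by omega) k ι = vPlusOne (by omega) k ι) ∧
    (Complex.exp (Complex.I * (kc k (idxOne d (by omega)) : ℂ)) ≠ 1 →
      LinearIndependent ℂ (fun ι : {ι : Idx d // 2 ≤ ι.1} => vPlusOne (by omega) k ι.1)) ∧
    (d - 1 : ℕ) ≤ Module.finrank ℂ
      ↥(Module.End.eigenspace (Matrix.toLin' (matA k)) 1) := by
  refine ⟨fun ι _ => matA_mulVec_vPlusOne (by omega) k ι, ?_, ?_⟩
  · -- linear independence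
    intro hz
    rw [Fintype.linearIndependent_iff]
    intro g hg ι
    have h := congrFun hg (negIdx ι.1)
    simp only [Finset.sum_apply, Pi.smul_apply, smul_eq_mul, Pi.zero_apply] at h
    rw [Finset.sum_congr rfl (fun ι' _ => by
      rw [vPlusOne_apply_negIdx (by omega : 1 ≤ d) k ι.1 ι'.1 ι.2 ι'.2])] at h
    have hcond : ∀ ι' : {ι : Idx d // 2 ≤ ι.1}, (ι'.1 = ι.1) = (ι' = ι) := by
      intro ι'; exact propext ⟨fun h => Subtype.ext h, fun h => by rw [h]⟩
    simp only [hcond, mul_ite, mul_zero, Finset.sum_ite_eq', Finset.mem_univ, if_true] at h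
    rcases mul_eq_zero.mp h with h' | h'
    · exact h'
    · exact absurd (by linear_combination -h' : Complex.exp
        (Complex.I * (kc k (idxOne d (by omega)) : ℂ)) = 1) hz
  · -- geometric multiplicity ≥ d - 1
    set E := Module.End.eigenspace (Matrix.toLin' (matA k)) 1 with hE
    have hsub : (LinearMap.ker (fMap k)).map (phiMap k) ≤ E := by
      rintro v ⟨c, hc, rfl⟩
      rw [hE, Module.End.mem_eigenspace_iff, one_smul, Matrix.toLin'_apply]
      exact phiMap_fixed k c hc
    have hker : (d - 1 : ℕ) ≤ Module.finrank ℂ (LinearMap.ker (fMap k)) := by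
      have h1 := LinearMap.finrank_range_add_finrank_ker (fMap k)
      have h2 : Module.finrank ℂ (LinearMap.range (fMap k)) ≤ 1 := by
        have := Submodule.finrank_le (LinearMap.range (fMap k))
        simpa [Module.finrank_self] using this
      rw [Module.finrank_fin_fun] at h1
      omega
    have heq : Module.finrank ℂ ((LinearMap.ker (fMap k)).map (phiMap k)) =
        Module.finrank ℂ (LinearMap.ker (fMap k)) :=
      (Submodule.equivMapOfInjective (phiMap k) (phiMap_injective k)
        (LinearMap.ker (fMap k))).finrank_eq.symm
    calc (d - 1 : ℕ) ≤ Module.finrank ℂ ((LinearMap.ker (fMap k)).map (phiMap k)) := by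
          rw [heq]; exact hker
      _ ≤ Module.finrank ℂ E := Submodule.finrank_mono hsub

end
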